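/- Let n ≥ 1 and h > 0. The coherent states form a resolution of the identity in the following sense: for every Y ∈ ℝⁿ × ℝⁿ and every u ∈ ℝⁿ, (2πh)^{−n} ∫_{ℝⁿ×ℝⁿ} ⟨Ψ_{Y,h}, Ψ_{X,h}⟩ · Ψ_{X,h}(u) dX = Ψ_{Y,h}(u), where ⟨f, g⟩ = ∫_{ℝⁿ} f(u) conj(g(u)) dμ_{h/2}(u) and dX is Lebesgue measure on ℝⁿ × ℝⁿ ≅ ℝ^{2n}. -/

import Mathlib

open MeasureTheory ProbabilityTheory Complex

/-- The Gaussian product measure on `ℝⁿ` with mean `0` and variance `t` in each coordinate. -/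
noncomputable def gaussRn (n : ℕ) (t : ℝ) : Measure (Fin n → ℝ) :=
  Measure.pi fun _ => gaussianReal 0 t.toNNReal

/-- The coherent state `Ψ_{(a,b),h} : ℝⁿ → ℂ`,
`Ψ_{(a,b),h}(u) = exp( (1/h) Σ_j (a_j + i b_j) u_j − ‖a‖²/(2h) − (i/(2h)) a·b )`. -/
noncomputable def coherent (n : ℕ) (h : ℝ) (a b : Fin n → ℝ) (u : Fin n → ℝ) : ℂ :=
  Complex.exp ((1 / (h : ℂ)) * ∑ j, ((a j : ℂ) + (b j : ℂ) * Complex.I) * (u j : ℂ)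
    - (∑ j, (a j : ℂ) ^ 2) / (2 * (h : ℂ))
    - (Complex.I / (2 * (h : ℂ))) * ∑ j, (a j : ℂ) * (b j : ℂ))

section Aux

open Real
open scoped ENNReal NNReal
set_option maxHeartbeats 1000000

/-- Per-coordinate exponent of a coherent state. -/
noncomputable def psiC (h a b u : ℝ) : ℂ :=
  ((a:ℂ) + (b:ℂ)*I) * u / h - (a:ℂ)^2/(2*h) - I*(a:ℂ)*(b:ℂ)/(2*h)

/-- Per-coordinate linear coefficient appearing in the overlap of two coherent states. -/
noncomputable def Zf (h c d a b : ℝ) : ℂ :=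
  (((c:ℂ)+(a:ℂ)) + ((d:ℂ)-(b:ℂ))*I)/h

/-- Per-coordinate constant term appearing in the overlap of two coherent states. -/
noncomputable def Wf (h c d a b : ℝ) : ℂ :=
  -(((c:ℂ)^2+(a:ℂ)^2)/(2*h)) - I*((c:ℂ)*(d:ℂ)-(a:ℂ)*(b:ℂ))/(2*h)

/-- Per-coordinate total exponent in the resolution-of-identity integral. -/
noncomputable def iE (h c d a b u : ℝ) : ℂ :=
  (h:ℂ)/4 * (Zf h c d a b)^2 + Wf h c d a b + psiC h a b u

lemma sqrt_cpow_half {x : ℝ} (hx : 0 < x) : ((x:ℂ)) ^ (1/2 : ℂ) = ((Real.sqrt x : ℝ) : ℂ) := by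
  rw [show (1/2 : ℂ) = ((1/2:ℝ):ℂ) by norm_num, ← Complex.ofReal_cpow hx.le, Real.sqrt_eq_rpow]

/-- Fubini for a product of one-variable functions over a finite product measure. -/
lemma integral_pi_eq_prod {n : ℕ} {α : Type*} [MeasurableSpace α] (μ : Measure α)
    [SigmaFinite μ] (f : Fin n → α → ℂ) :
    ∫ x : Fin n → α, ∏ j, f j (x j) ∂(Measure.pi fun _ => μ) = ∏ j, ∫ x, f j x ∂μ := by
  letI : MeasureSpace α := ⟨μ⟩
  haveI : SigmaFinite (volume : Measure α) := inferInstanceAs (SigmaFinite μ)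
  exact MeasureTheory.integral_fintype_prod_eq_prod f (μ := fun _ => μ)

/-- Gaussian moment generating identity for variance `h/2`. -/
lemma key1 {h : ℝ} (hh : 0 < h) (z w : ℂ) :
    ∫ x : ℝ, cexp (z * x + w) ∂(gaussianReal 0 (h/2).toNNReal)
      = cexp ((h:ℂ)/4 * z^2 + w) := by
  have hne0 : (h:ℂ) ≠ 0 := by exact_mod_cast hh.ne'
  have hv : ((h/2).toNNReal : ℝ≥0) ≠ 0 := by
    simp only [ne_eq, Real.toNNReal_eq_zero, not_le]
    linarith
  rw [gaussianReal_of_var_ne_zero _ hv]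
  have hd : gaussianPDF 0 (h/2).toNNReal
      = fun x => ((fun x => Real.toNNReal (gaussianPDFReal 0 (h/2).toNNReal x)) x : ℝ≥0∞) := rfl
  rw [hd, integral_withDensity_eq_integral_smul ((measurable_gaussianPDFReal _ _).real_toNNReal)]
  have hc : ((h/2).toNNReal : ℝ) = h/2 := Real.coe_toNNReal _ (by linarith)
  have hπh : (0:ℝ) < π * h := by positivity
  have hcalc : ∀ x : ℝ, (Real.toNNReal (gaussianPDFReal 0 (h/2).toNNReal x)) • cexp (z*x+w)
      = ((Real.sqrt (π*h) : ℝ):ℂ)⁻¹ * cexp ((-(1/(h:ℂ)))*(x:ℂ)^2 + z*(x:ℂ) + w) := by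
    intro x
    rw [NNReal.smul_def, Real.coe_toNNReal _ (gaussianPDFReal_nonneg _ _ x)]
    rw [gaussianPDFReal_def]
    simp only [hc]
    have h1 : 2 * π * (h/2) = π * h := by ring
    have h2 : 2 * (h/2) = h := by ring
    rw [h1, h2, real_smul]
    push_cast
    rw [mul_assoc, ← Complex.exp_add]
    congr 2
    field_simp
    ring
  simp only [hcalc]
  have hb : ((-(1/(h:ℂ)))).re < 0 := by
    rw [show (-(1/(h:ℂ))) = ((-(1/h):ℝ):ℂ) by push_cast; ring, Complex.ofReal_re]
    rw [neg_lt_zero]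
    positivity
  rw [integral_const_mul, integral_cexp_quadratic hb z w]
  have hne : (Real.sqrt (π*h) : ℂ) ≠ 0 := by
    simp only [ne_eq, Complex.ofReal_eq_zero]
    positivity
  have hconst : (↑π / -(-(1/(h:ℂ)))) ^ (1/2 : ℂ) = (Real.sqrt (π*h) : ℂ) := by
    have h0 : (↑π / -(-(1/(h:ℂ)))) = ((π * h : ℝ) : ℂ) := by
      push_cast
      field_simp
    rw [h0, sqrt_cpow_half hπh]
  rw [hconst, ← mul_assoc, inv_mul_cancel₀ hne, one_mul]
  congr 1
  field_simp
  ring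

/-- The basic two-dimensional Gaussian integral underlying the resolution of the identity. -/
lemma key2 {h : ℝ} (hh : 0 < h) (c d u : ℝ) :
    ∫ p : ℝ × ℝ, cexp (iE h c d p.1 p.2 u) = ((2*π*h : ℝ):ℂ) * cexp (psiC h c d u) := by
  have hne0 : (h:ℂ) ≠ 0 := by exact_mod_cast hh.ne'
  have hkey : ∀ S : ℂ, (h:ℂ)/4 * (S/ (h:ℂ))^2 = S^2/(4*h) := by
    intro S; rw [div_pow, pow_two]; field_simp
  set B1 : ℂ := -(1/(4*(h:ℂ))) with hB1
  set B2 : ℂ := -(1/(h:ℂ)) with hB2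
  have hB1re : B1.re < 0 := by
    rw [hB1, show -(1/(4*(h:ℂ))) = ((-(1/(4*h)):ℝ):ℂ) by push_cast; ring, Complex.ofReal_re,
      neg_lt_zero]
    positivity
  have hB2re : B2.re < 0 := by
    rw [hB2, show -(1/((h:ℂ))) = ((-(1/h):ℝ):ℂ) by push_cast; ring, Complex.ofReal_re,
      neg_lt_zero]
    positivity
  set Cb : ℂ := (d:ℂ)/(2*h) - I*(c:ℂ)/(2*h) + I*(u:ℂ)/h with hCb
  set q1 : ℝ → ℂ := fun a => -(3/(4*(h:ℂ)))*(a:ℂ)^2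
      + ((c:ℂ)/(2*h) + I*(d:ℂ)/(2*h) + (u:ℂ)/h)*(a:ℂ) - ((c:ℂ)^2+(d:ℂ)^2)/(4*h) with hq1
  set D2 : ℂ := -(c:ℂ)^2/(2*h) - I*(c:ℂ)*(d:ℂ)/(2*h) - (u:ℂ)^2/h + (u:ℂ)*(c:ℂ)/h
      + I*(d:ℂ)*(u:ℂ)/h with hD2
  have hdecomp : ∀ a b : ℝ, iE h c d a b u
      = q1 a + (B1*(b:ℂ)^2 + Cb*(b:ℂ)) + (-(I/(2*(h:ℂ))))*(a:ℂ)*(b:ℂ) := by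
    intro a b
    simp only [iE, Zf, Wf, psiC, hq1, hB1, hCb]
    rw [hkey]
    ring_nf
    simp only [Complex.I_sq]
    ring
  have hq1int : Integrable (fun a : ℝ => cexp (-(3/(4*(h:ℂ)))*(a:ℂ)^2
      + ((c:ℂ)/(2*h) + I*(d:ℂ)/(2*h) + (u:ℂ)/h)*(a:ℂ) + (-(((c:ℂ)^2+(d:ℂ)^2)/(4*h))))) := by
    refine integrable_cexp_quadratic' ?_ _ _
    rw [show -(3/(4*(h:ℂ))) = ((-(3/(4*h)):ℝ):ℂ) by push_cast; ring, Complex.ofReal_re,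
      neg_lt_zero]
    positivity
  have hq2int : Integrable (fun b : ℝ => cexp (B1*(b:ℂ)^2 + Cb*(b:ℂ))) := by
    have := integrable_cexp_quadratic' hB1re Cb 0
    simpa using this
  have hInt : Integrable (fun p : ℝ × ℝ => cexp (iE h c d p.1 p.2 u))
      (volume.prod volume) := by
    apply Integrable.mono' (hq1int.norm.mul_prod hq2int.norm)
    · apply Continuous.aestronglyMeasurable
      unfold iE Zf Wf psiC
      fun_prop
    · filter_upwards with p
      rw [hdecomp p.1 p.2]
      have hq1eq : q1 p.1 = -(3/(4*(h:ℂ)))*(p.1:ℂ)^2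
          + ((c:ℂ)/(2*h) + I*(d:ℂ)/(2*h) + (u:ℂ)/h)*(p.1:ℂ)
          + (-(((c:ℂ)^2+(d:ℂ)^2)/(4*h))) := by simp only [hq1]; ring
      rw [Complex.exp_add, Complex.exp_add, norm_mul, norm_mul]
      have h1 : ‖cexp (-(I/(2*(h:ℂ)))*(p.1:ℂ)*(p.2:ℂ))‖ = 1 := by
        rw [show -(I/(2*(h:ℂ)))*(p.1:ℂ)*(p.2:ℂ) = ((-(p.1*p.2/(2*h)) : ℝ):ℂ) * I by
          push_cast; ring]
        rw [Complex.norm_exp_ofReal_mul_I]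
      rw [h1, mul_one, hq1eq]
  rw [show (volume : Measure (ℝ × ℝ)) = volume.prod volume from rfl,
    integral_prod _ hInt]
  dsimp only
  have hπh4 : (0:ℝ) < 4*π*h := by positivity
  have hπh : (0:ℝ) < π*h := by positivity
  have hin : ∀ a : ℝ, (∫ b : ℝ, cexp (iE h c d a b u))
      = ((Real.sqrt (4*π*h) : ℝ):ℂ) * cexp (B2*(a:ℂ)^2 + (2*(u:ℂ)/h)*(a:ℂ) + D2) := by
    intro a
    have hfun : (fun b : ℝ => cexp (iE h c d a b u))
        = fun b : ℝ => cexp (B1*(b:ℂ)^2 + (Cb + (-(I/(2*(h:ℂ))))*(a:ℂ))*(b:ℂ) + q1 a) := by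
      funext b
      rw [hdecomp a b]
      congr 1
      ring
    rw [hfun, integral_cexp_quadratic hB1re]
    have hconst : (↑π / -B1) ^ (1/2 : ℂ) = ((Real.sqrt (4*π*h) : ℝ):ℂ) := by
      rw [show (↑π / -B1 : ℂ) = ((4*π*h : ℝ):ℂ) by
        rw [hB1, neg_neg, one_div, div_inv_eq_mul]; push_cast; ring,
        sqrt_cpow_half hπh4]
    rw [hconst]
    congr 1
    have hS : Cb + (-(I/(2*(h:ℂ))))*(a:ℂ)
        = ((d:ℂ)/2 - I*(c:ℂ)/2 + I*(u:ℂ) - I*(a:ℂ)/2)/h := by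
      rw [hCb]; ring
    have hsq : ∀ X : ℂ, (X/(h:ℂ))^2/(4*B1) = -(X^2/h) := by
      intro X
      rw [hB1, div_pow, pow_two]
      field_simp
    rw [hS, hsq]
    simp only [hq1, hB2, hD2]
    ring_nf
    simp only [Complex.I_sq]
    ring
  simp only [hin]
  rw [integral_const_mul, integral_cexp_quadratic hB2re]
  have hconst2 : (↑π / -B2) ^ (1/2 : ℂ) = ((Real.sqrt (π*h) : ℝ):ℂ) := by
    rw [show (↑π / -B2 : ℂ) = ((π*h : ℝ):ℂ) by
      rw [hB2, neg_neg, one_div, div_inv_eq_mul]; push_cast; ring,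
      sqrt_cpow_half hπh]
  rw [hconst2]
  have hsq2 : (2*(u:ℂ)/h)^2/(4*B2) = -((u:ℂ)^2/h) := by
    rw [hB2, div_pow, pow_two]
    field_simp
    ring
  have hexp : D2 - (2*(u:ℂ)/h)^2/(4*B2) = psiC h c d u := by
    rw [hsq2, hD2, psiC]
    ring
  rw [hexp, ← mul_assoc, ← Complex.ofReal_mul]
  congr 2
  rw [← Real.sqrt_mul hπh4.le, show 4*π*h*(π*h) = (2*π*h)^2 by ring,
    Real.sqrt_sq (by positivity)]

/-- A coherent state as a product of per-coordinate exponentials. -/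
lemma coherent_eq_prod (n : ℕ) (h : ℝ) (a b u : Fin n → ℝ) :
    coherent n h a b u = ∏ j, cexp (psiC h (a j) (b j) (u j)) := by
  rw [coherent, show ((1 / (h : ℂ)) * ∑ j, ((a j : ℂ) + (b j : ℂ) * Complex.I) * (u j : ℂ)
      - (∑ j, (a j : ℂ) ^ 2) / (2 * (h : ℂ))
      - (Complex.I / (2 * (h : ℂ))) * ∑ j, (a j : ℂ) * (b j : ℂ))
      = ∑ j, psiC h (a j) (b j) (u j) by
    rw [Finset.mul_sum, Finset.sum_div, Finset.mul_sum, ← Finset.sum_sub_distrib,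
      ← Finset.sum_sub_distrib]
    refine Finset.sum_congr rfl fun j _ => ?_
    rw [psiC]
    ring]
  exact Complex.exp_sum _ _

/-- Conjugate of a per-coordinate coherent exponential. -/
lemma conj_exp_psiC (h a b x : ℝ) :
    (starRingEnd ℂ) (cexp (psiC h a b x))
      = cexp (((a:ℂ) - (b:ℂ)*I) * x / h - (a:ℂ)^2/(2*h) + I*(a:ℂ)*(b:ℂ)/(2*h)) := by
  rw [← Complex.exp_conj]
  congr 1
  simp only [psiC, map_sub, map_add, map_div₀, map_mul, map_pow, Complex.conj_ofReal,
    Complex.conj_I, map_ofNat]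
  ring

end Aux

/-- Resolution of the identity by coherent states:
`(2πh)^{−n} ∫_{ℝ²ⁿ} ⟨Ψ_{Y,h}, Ψ_{X,h}⟩ · Ψ_{X,h}(u) dX = Ψ_{Y,h}(u)`,
where `⟨f,g⟩ = ∫ f conj(g) dμ_{h/2}` and `dX` is Lebesgue measure on `ℝⁿ × ℝⁿ`. -/
theorem coherent_resolution_of_identity
    (n : ℕ) (hn : 1 ≤ n) (h : ℝ) (hh : 0 < h)
    (Y : (Fin n → ℝ) × (Fin n → ℝ)) (u : Fin n → ℝ) :
    (((2 * Real.pi * h) ^ n : ℝ) : ℂ)⁻¹ *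
      ∫ X : (Fin n → ℝ) × (Fin n → ℝ),
        (∫ u', coherent n h Y.1 Y.2 u' * (starRingEnd ℂ) (coherent n h X.1 X.2 u')
            ∂(gaussRn n (h / 2)))
          * coherent n h X.1 X.2 u
      = coherent n h Y.1 Y.2 u := by
  have hne0 : (h:ℂ) ≠ 0 := by exact_mod_cast hh.ne'
  -- Step 1: the inner product of two coherent states
  have step1 : ∀ X : (Fin n → ℝ) × (Fin n → ℝ),
      (∫ u', coherent n h Y.1 Y.2 u' * (starRingEnd ℂ) (coherent n h X.1 X.2 u')
          ∂(gaussRn n (h / 2)))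
        = ∏ j, cexp ((h:ℂ)/4 * (Zf h (Y.1 j) (Y.2 j) (X.1 j) (X.2 j))^2
            + Wf h (Y.1 j) (Y.2 j) (X.1 j) (X.2 j)) := by
    intro X
    have hpt : ∀ u' : Fin n → ℝ,
        coherent n h Y.1 Y.2 u' * (starRingEnd ℂ) (coherent n h X.1 X.2 u')
          = ∏ j, cexp (Zf h (Y.1 j) (Y.2 j) (X.1 j) (X.2 j) * ((u' j : ℝ) : ℂ)
              + Wf h (Y.1 j) (Y.2 j) (X.1 j) (X.2 j)) := by
      intro u'
      rw [coherent_eq_prod, coherent_eq_prod, map_prod, ← Finset.prod_mul_distrib]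
      refine Finset.prod_congr rfl fun j _ => ?_
      rw [conj_exp_psiC, ← Complex.exp_add]
      congr 1
      rw [psiC, Zf, Wf]
      ring
    simp only [hpt]
    rw [show gaussRn n (h / 2) = Measure.pi (fun _ : Fin n => gaussianReal 0 (h/2).toNNReal)
      from rfl]
    exact (integral_pi_eq_prod _ (fun j (x : ℝ) =>
        cexp (Zf h (Y.1 j) (Y.2 j) (X.1 j) (X.2 j) * (x:ℂ)
          + Wf h (Y.1 j) (Y.2 j) (X.1 j) (X.2 j)))).trans
      (Finset.prod_congr rfl fun j _ => key1 hh _ _)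
  -- Step 2: the integrand of the outer integral as a product over coordinates
  have step2 : ∀ X : (Fin n → ℝ) × (Fin n → ℝ),
      (∫ u', coherent n h Y.1 Y.2 u' * (starRingEnd ℂ) (coherent n h X.1 X.2 u')
          ∂(gaussRn n (h / 2))) * coherent n h X.1 X.2 u
        = ∏ j, cexp (iE h (Y.1 j) (Y.2 j) (X.1 j) (X.2 j) (u j)) := by
    intro X
    rw [step1 X, coherent_eq_prod, ← Finset.prod_mul_distrib]
    refine Finset.prod_congr rfl fun j _ => ?_
    rw [← Complex.exp_add, iE]
  -- Step 3: compute the outer integral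
  have e := MeasurableEquiv.arrowProdEquivProdArrow ℝ ℝ (Fin n)
  have hmp := MeasureTheory.volume_measurePreserving_arrowProdEquivProdArrow ℝ ℝ (Fin n)
  have he : ∀ x : Fin n → ℝ × ℝ,
      (MeasurableEquiv.arrowProdEquivProdArrow ℝ ℝ (Fin n)) x
        = (fun j => (x j).1, fun j => (x j).2) := fun _ => rfl
  have big : (∫ X : (Fin n → ℝ) × (Fin n → ℝ),
        (∫ u', coherent n h Y.1 Y.2 u' * (starRingEnd ℂ) (coherent n h X.1 X.2 u')
            ∂(gaussRn n (h / 2)))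
          * coherent n h X.1 X.2 u)
      = ((2*Real.pi*h : ℝ):ℂ)^n * coherent n h Y.1 Y.2 u := by
    calc
      _ = ∫ X : (Fin n → ℝ) × (Fin n → ℝ),
            ∏ j, cexp (iE h (Y.1 j) (Y.2 j) (X.1 j) (X.2 j) (u j)) := by
        exact integral_congr_ae (Filter.Eventually.of_forall step2)
      _ = ∫ x : Fin n → ℝ × ℝ,
            ∏ j, cexp (iE h (Y.1 j) (Y.2 j) ((x j).1) ((x j).2) (u j)) := by
        rw [← hmp.integral_comp' (fun X : (Fin n → ℝ) × (Fin n → ℝ) =>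
          ∏ j, cexp (iE h (Y.1 j) (Y.2 j) (X.1 j) (X.2 j) (u j)))]
        refine integral_congr_ae (Filter.Eventually.of_forall fun x => ?_)
        simp only [he]
      _ = ∏ j, ∫ p : ℝ × ℝ, cexp (iE h (Y.1 j) (Y.2 j) p.1 p.2 (u j)) := by
        rw [show (volume : Measure (Fin n → ℝ × ℝ))
          = Measure.pi (fun _ : Fin n => (volume : Measure (ℝ × ℝ))) from rfl]
        exact integral_pi_eq_prod _ (fun j (p : ℝ × ℝ) =>
          cexp (iE h (Y.1 j) (Y.2 j) p.1 p.2 (u j)))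
      _ = ∏ j : Fin n, (((2*Real.pi*h : ℝ):ℂ) * cexp (psiC h (Y.1 j) (Y.2 j) (u j))) :=
        Finset.prod_congr rfl fun j _ => key2 hh _ _ _
      _ = ((2*Real.pi*h : ℝ):ℂ)^n * ∏ j, cexp (psiC h (Y.1 j) (Y.2 j) (u j)) := by
        rw [Finset.prod_mul_distrib, Finset.prod_const, Finset.card_univ, Fintype.card_fin]
      _ = ((2*Real.pi*h : ℝ):ℂ)^n * coherent n h Y.1 Y.2 u := by
        rw [← coherent_eq_prod]
  rw [big, ← mul_assoc]
  have hpos : (0:ℝ) < 2*Real.pi*h := by positivity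
  have : (((2 * Real.pi * h) ^ n : ℝ) : ℂ)⁻¹ * ((2*Real.pi*h : ℝ):ℂ)^n = 1 := by
    rw [Complex.ofReal_pow]
    exact inv_mul_cancel₀ (pow_ne_zero _ (by exact_mod_cast hpos.ne'))
  rw [this, one_mul]
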